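/- Let κ be a cardinal with ℵ1 ≤ κ ≤ 2^ℵ0. Then there exist sets O, E ⊆ ℕ → ℕ, each κ-dense (for every nonempty open U, the cardinality of O ∩ U equals κ, and likewise for E), such that: for every A ⊆ O with ℵ1 ≤ #A and every f : (ℕ → ℕ) → (ℕ → ℕ) with f '' A ⊆ E, f is not an isometry on A (there exist x, y ∈ A and n such that it is not the case that x and y agree below n iff f x and f y agree below n); and symmetrically, for every A ⊆ E with ℵ1 ≤ #A and every f with f '' A ⊆ O, f is not an isometry on A. -/

import Mathlib

open Cardinal Set

/-- Sequences eventually zero at positions of parity `p`. -/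
def Spar (p : ℕ) : Set (ℕ → ℕ) := {x | ∃ N, ∀ i, N ≤ i → i % 2 = p → x i = 0}

lemma core_lemma (p : ℕ) (hp : p < 2) (A : Set (ℕ → ℕ)) (hAS : A ⊆ Spar p)
    (hcard : Cardinal.aleph 1 ≤ Cardinal.mk ↥A)
    (f : (ℕ → ℕ) → (ℕ → ℕ)) (hf : f '' A ⊆ Spar (1 - p)) :
    ∃ x ∈ A, ∃ y ∈ A, ∃ n : ℕ,
      ¬ ((∀ i < n, x i = y i) ↔ (∀ i < n, f x i = f y i)) := by
  by_contra hcon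
  push_neg at hcon
  -- hcon : ∀ x ∈ A, ∀ y ∈ A, ∀ n, iff
  have hAu : ¬ A.Countable := by
    intro hc
    have h1 : Cardinal.mk ↥A ≤ Cardinal.aleph0 :=
      Cardinal.mk_le_aleph0_iff.mpr (Set.countable_coe_iff.mpr hc)
    exact absurd (hcard.trans h1) (not_le.mpr Cardinal.aleph0_lt_aleph_one)
  -- split A by the bound N
  set AN : ℕ → Set (ℕ → ℕ) :=
    fun N => {x | x ∈ A ∧ ∀ i, N ≤ i → i % 2 = p → x i = 0} with hANdef
  have hAsub : A ⊆ ⋃ N, AN N := by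
    intro x hx
    obtain ⟨N, hN⟩ := hAS hx
    exact Set.mem_iUnion.mpr ⟨N, hx, hN⟩
  obtain ⟨N, hNu⟩ : ∃ N, ¬ (AN N).Countable := by
    by_contra h
    push_neg at h
    exact hAu ((Set.countable_iUnion h).mono hAsub)
  -- split the image by the bound M
  set B : Set (ℕ → ℕ) := f '' AN N with hBdef
  set BM : ℕ → Set (ℕ → ℕ) :=
    fun M => {y | y ∈ B ∧ ∀ i, M ≤ i → i % 2 = 1 - p → y i = 0} with hBMdef
  have hBu : ¬ B.Countable := by
    intro hc
    apply hNu
    rw [← Set.countable_coe_iff]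
    have : Countable ↥B := Set.countable_coe_iff.mpr hc
    refine Function.Injective.countable
      (f := fun x : ↥(AN N) => (⟨f x, Set.mem_image_of_mem f x.2⟩ : ↥B)) ?_
    rintro ⟨x, hx, hx2⟩ ⟨y, hy, hy2⟩ hxy
    simp only [Subtype.mk.injEq] at hxy ⊢
    -- injectivity of f on A
    by_contra hne
    obtain ⟨i, hi⟩ := Function.ne_iff.mp hne
    have := (hcon x hx y hy (i + 1)).mpr (by intro j _; rw [hxy]) i (Nat.lt_succ_self i)
    exact hi this
  have hBsub : B ⊆ ⋃ M, BM M := by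
    rintro y ⟨x, hx, rfl⟩
    obtain ⟨M, hM⟩ := hf (Set.mem_image_of_mem f hx.1)
    exact Set.mem_iUnion.mpr ⟨M, ⟨x, hx, rfl⟩, hM⟩
  obtain ⟨M, hMu⟩ : ∃ M, ¬ (BM M).Countable := by
    by_contra h
    push_neg at h
    exact hBu ((Set.countable_iUnion h).mono hBsub)
  -- the final set
  set A2 : Set (ℕ → ℕ) := {x | x ∈ AN N ∧ f x ∈ BM M} with hA2def
  have hA2u : ¬ A2.Countable := by
    intro hc
    apply hMu
    have himg : BM M ⊆ f '' A2 := by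
      intro y hy
      obtain ⟨x, hx, rfl⟩ := hy.1
      exact ⟨x, ⟨hx, hy⟩, rfl⟩
    exact (hc.image f).mono himg
  -- but A2 is countable: determined by the first K values
  apply hA2u
  rw [← Set.countable_coe_iff]
  refine Function.Injective.countable
    (f := fun x : ↥A2 => (fun i : Fin (max N M) => (x : ℕ → ℕ) i)) ?_
  rintro ⟨x, hx⟩ ⟨y, hy⟩ hxy
  simp only [Subtype.mk.injEq]
  by_contra hne
  have hex : ∃ i, x i ≠ y i := Function.ne_iff.mp hne
  classical
  set i0 := Nat.find hex with hi0def
  have hi0 : x i0 ≠ y i0 := Nat.find_spec hex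
  have hmin : ∀ j < i0, x j = y j := by
    intro j hj
    by_contra hj'
    exact absurd (Nat.find_le hj') (not_le.mpr hj)
  have hK : max N M ≤ i0 := by
    by_contra hK
    push_neg at hK
    exact hi0 (congrFun hxy ⟨i0, hK⟩)
  have hxA : x ∈ A := hx.1.1
  have hyA : y ∈ A := hy.1.1
  -- images agree below i0
  have hfeq : ∀ j < i0, f x j = f y j := (hcon x hxA y hyA i0).mp hmin
  -- images differ at i0
  have hfne : f x i0 ≠ f y i0 := by
    intro heq
    apply hi0
    refine (hcon x hxA y hyA (i0 + 1)).mpr ?_ i0 (Nat.lt_succ_self i0)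
    intro j hj
    rcases Nat.lt_succ_iff_lt_or_eq.mp hj with h | h
    · exact hfeq j h
    · rw [h]; exact heq
  -- parity contradiction
  by_cases hpp : i0 % 2 = p
  · exact hi0 (by
      rw [hx.1.2 i0 (le_trans (le_max_left N M) hK) hpp,
        hy.1.2 i0 (le_trans (le_max_left N M) hK) hpp])
  · have hq : i0 % 2 = 1 - p := by omega
    exact hfne (by
      rw [hx.2.2 i0 (le_trans (le_max_right N M) hK) hq,
        hy.2.2 i0 (le_trans (le_max_right N M) hK) hq])

/-- Every point of an open set has a cylinder neighborhood inside it. -/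
lemma cyl_subset {U : Set (ℕ → ℕ)} (hU : IsOpen U) {x : ℕ → ℕ} (hx : x ∈ U) :
    ∃ n, {y : ℕ → ℕ | ∀ i < n, y i = x i} ⊆ U := by
  obtain ⟨I, u, hu, hsub⟩ := isOpen_pi_iff.mp hU x hx
  refine ⟨I.sup id + 1, fun y hy => hsub ?_⟩
  intro a ha
  have : y a = x a := hy a (Nat.lt_succ_of_le (Finset.le_sup (f := id) ha))
  rw [this]
  exact (hu a ha).2

/-- Existence of a `κ`-dense subset of `Spar p`. -/
lemma exists_dense (κ : Cardinal.{0}) (h1 : Cardinal.aleph 1 ≤ κ)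
    (h2 : κ ≤ 2 ^ Cardinal.aleph0) (p : ℕ) (hp : p < 2) :
    ∃ O : Set (ℕ → ℕ), O ⊆ Spar p ∧
      ∀ U : Set (ℕ → ℕ), IsOpen U → U.Nonempty → Cardinal.mk ↥(O ∩ U) = κ := by
  classical
  -- cylinders
  set C : List ℕ → Set (ℕ → ℕ) :=
    fun s => {x | ∀ i < s.length, x i = s.getD i 0} with hCdef
  -- each Spar p ∩ C s has at least continuum many elements
  have hbig : ∀ s : List ℕ, κ ≤ Cardinal.mk ↥(Spar p ∩ C s) := by
    intro s
    set len := s.length with hlen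
    set ι : (ℕ → Bool) → (ℕ → ℕ) := fun t i =>
      if i < len then s.getD i 0
      else if i % 2 = p then 0
      else if len ≤ i / 2 then (if t (i / 2 - len) then 1 else 0) else 0 with hι
    have hmem : ∀ t, ι t ∈ Spar p ∩ C s := by
      intro t
      constructor
      · exact ⟨len, fun i hi hip => by simp only [hι, if_neg (not_lt.mpr hi), if_pos hip]⟩
      · intro i hi
        simp only [hι]
        rw [if_pos hi]
    have hinj : Function.Injective ι := by
      intro t1 t2 ht
      funext j
      have := congrFun ht (2 * (len + j) + (1 - p))
      have e1 : ¬ (2 * (len + j) + (1 - p) < len) := by omega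
      have e2 : ¬ ((2 * (len + j) + (1 - p)) % 2 = p) := by omega
      have e3 : (2 * (len + j) + (1 - p)) / 2 = len + j := by omega
      simp only [hι, if_neg e1, if_neg e2, e3, if_pos (Nat.le_add_right len j),
        Nat.add_sub_cancel_left] at this
      cases h1 : t1 j <;> cases h2 : t2 j <;> simp [h1, h2] at this ⊢
    have hcont : (2 : Cardinal) ^ Cardinal.aleph0 ≤ Cardinal.mk ↥(Spar p ∩ C s) := by
      have : Cardinal.mk (ℕ → Bool) ≤ Cardinal.mk ↥(Spar p ∩ C s) :=
        Cardinal.mk_le_of_injective (f := fun t => (⟨ι t, hmem t⟩ : ↥(Spar p ∩ C s)))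
          (fun a b hab => hinj (congrArg Subtype.val hab))
      calc (2 : Cardinal) ^ Cardinal.aleph0 = Cardinal.mk Bool ^ Cardinal.mk ℕ := by
            rw [Cardinal.mk_bool, Cardinal.mk_nat]
        _ = Cardinal.mk (ℕ → Bool) := Cardinal.power_def Bool ℕ
        _ ≤ _ := this
    exact h2.trans hcont
  -- choose a subset of size κ in each
  have hchoice : ∀ s : List ℕ, ∃ P : Set (ℕ → ℕ), P ⊆ Spar p ∩ C s ∧ Cardinal.mk ↥P = κ :=
    fun s => Cardinal.le_mk_iff_exists_subset.mp (hbig s)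
  choose P hPsub hPcard using hchoice
  refine ⟨⋃ s, P s, ?_, ?_⟩
  · exact Set.iUnion_subset fun s => (hPsub s).trans (Set.inter_subset_left)
  · intro U hU ⟨x, hx⟩
    obtain ⟨n, hn⟩ := cyl_subset hU hx
    set s : List ℕ := List.ofFn (fun i : Fin n => x i) with hs
    have hlen : s.length = n := List.length_ofFn
    have hCU : C s ⊆ U := by
      intro y hy
      apply hn
      intro i hi
      have hy' := hy i (by rw [hlen]; exact hi)
      rw [hy']
      rw [List.getD_eq_getElem _ _ (by rw [hlen]; exact hi)]
      simp [hs]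
    have hsubU : P s ⊆ (⋃ s', P s') ∩ U := by
      intro y hy
      exact ⟨Set.mem_iUnion.mpr ⟨s, hy⟩, hCU ((hPsub s hy).2)⟩
    have hlow : κ ≤ Cardinal.mk ↥((⋃ s', P s') ∩ U) := by
      rw [← hPcard s]
      exact Cardinal.mk_le_mk_of_subset hsubU
    have hup : Cardinal.mk ↥((⋃ s', P s') ∩ U) ≤ κ := by
      have h3 : Cardinal.mk ↥(⋃ s', P s') ≤
          Cardinal.mk (List ℕ) * ⨆ s', Cardinal.mk ↥(P s') := Cardinal.mk_iUnion_le _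
      have h4 : (⨆ s', Cardinal.mk ↥(P s')) = κ := by
        simp only [hPcard]
        exact ciSup_const
      have h5 : Cardinal.mk (List ℕ) = Cardinal.aleph0 := Cardinal.mk_list_eq_aleph0 ℕ
      have h6 : Cardinal.aleph0 * κ = κ := by
        rw [Cardinal.mul_eq_max le_rfl (Cardinal.aleph0_le_aleph 1 |>.trans h1)]
        exact max_eq_right (Cardinal.aleph0_le_aleph 1 |>.trans h1)
      calc Cardinal.mk ↥((⋃ s', P s') ∩ U) ≤ Cardinal.mk ↥(⋃ s', P s') :=
            Cardinal.mk_le_mk_of_subset Set.inter_subset_left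
        _ ≤ _ := h3
        _ = Cardinal.aleph0 * κ := by rw [h4, h5]
        _ = κ := h6
    exact le_antisymm hup hlow

/-- For any cardinal `κ` with `ℵ₁ ≤ κ ≤ 2^ℵ₀` there are `κ`-dense sets `O, E ⊆ ℕ → ℕ`
such that no function mapping an uncountable subset of one into the other is an isometry
on that subset. -/
theorem stmt_4 (κ : Cardinal.{0}) (h1 : Cardinal.aleph 1 ≤ κ)
    (h2 : κ ≤ 2 ^ Cardinal.aleph0) :
    ∃ O E : Set (ℕ → ℕ),
      (∀ U : Set (ℕ → ℕ), IsOpen U → U.Nonempty → Cardinal.mk ↥(O ∩ U) = κ) ∧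
      (∀ U : Set (ℕ → ℕ), IsOpen U → U.Nonempty → Cardinal.mk ↥(E ∩ U) = κ) ∧
      (∀ A : Set (ℕ → ℕ), A ⊆ O → Cardinal.aleph 1 ≤ Cardinal.mk ↥A →
        ∀ f : (ℕ → ℕ) → (ℕ → ℕ), f '' A ⊆ E →
          ∃ x ∈ A, ∃ y ∈ A, ∃ n : ℕ,
            ¬ ((∀ i < n, x i = y i) ↔ (∀ i < n, f x i = f y i))) ∧
      (∀ A : Set (ℕ → ℕ), A ⊆ E → Cardinal.aleph 1 ≤ Cardinal.mk ↥A →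
        ∀ f : (ℕ → ℕ) → (ℕ → ℕ), f '' A ⊆ O →
          ∃ x ∈ A, ∃ y ∈ A, ∃ n : ℕ,
            ¬ ((∀ i < n, x i = y i) ↔ (∀ i < n, f x i = f y i))) := by
  obtain ⟨O, hOsub, hOdense⟩ := exists_dense κ h1 h2 1 (by norm_num)
  obtain ⟨E, hEsub, hEdense⟩ := exists_dense κ h1 h2 0 (by norm_num)
  refine ⟨O, E, hOdense, hEdense, ?_, ?_⟩
  · intro A hAO hA f hf
    exact core_lemma 1 (by norm_num) A (hAO.trans hOsub) hA f
      (by simpa using hf.trans hEsub)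
  · intro A hAE hA f hf
    exact core_lemma 0 (by norm_num) A (hAE.trans hEsub) hA f
      (by simpa using hf.trans hOsub)
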